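/- Let p be a real polynomial with deg p ≤ r, let c ∈ ℝ, let q(y) = c + ∫_{0}^{y} p(t) dt, and let F = p′ · q (where p′ is the derivative of p). Then deg F ≤ 2r, the coefficient of X^{2r} in F equals (r/(r+1)) · a^2 where a is the coefficient of X^r in p, and ∫_{−1}^{1} F(y) dy ≥ Σ_{k=1}^{r} A_k · F(G_k). -/

import Mathlib

open Polynomial MeasureTheory

/-- `Leg r` is the `r`-th (formal) derivative of `(X² − 1)^r, a nonzero scalar
multiple of the degree-`r` Legendre polynomial. -/
noncomputable def Leg (r : ℕ) : Polynomial ℝ :=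
  (fun p => Polynomial.derivative p)^[r] ((Polynomial.X ^ 2 - 1) ^ r)

/-- `G 1 < … < G r` are the Gauss points: the roots of `Leg r`, all in `(-1,1)`. -/
def IsGaussPoints (r : ℕ) (G : ℕ → ℝ) : Prop :=
  (∀ k, 1 ≤ k → k < r → G k < G (k + 1)) ∧
  ∀ k, 1 ≤ k → k ≤ r → G k ∈ Set.Ioo (-1 : ℝ) 1 ∧ (Leg r).IsRoot (G k)

/-- `A k = ∫_{-1}^{1} ℓ_k` where `ℓ_k` is the Lagrange basis polynomial of degree
`≤ r - 1` at the Gauss points, i.e. `ℓ_k (G j) = δ_{jk}`. -/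
def IsGaussWeights (r : ℕ) (G A : ℕ → ℝ) : Prop :=
  ∀ k, 1 ≤ k → k ≤ r → ∃ ℓ : Polynomial ℝ,
    ℓ.natDegree ≤ r - 1 ∧
    (∀ j, 1 ≤ j → j ≤ r → ℓ.eval (G j) = if j = k then 1 else 0) ∧
    A k = ∫ x in (-1 : ℝ)..1, ℓ.eval x

lemma integral_poly_derivative (P : Polynomial ℝ) (a b : ℝ) :
    ∫ x in a..b, (Polynomial.derivative P).eval x = P.eval b - P.eval a := by
  refine intervalIntegral.integral_deriv_eq_sub' (fun x => P.eval x) ?_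
    (fun x _ => P.differentiableAt) ((Polynomial.derivative P).continuous.continuousOn)
  funext x; exact P.deriv

lemma iterDeriv_w_root (r m : ℕ) (hm : m < r) (x : ℝ) (hx : x = 1 ∨ x = -1) :
    ((fun p => Polynomial.derivative p)^[m] ((X ^ 2 - 1 : Polynomial ℝ) ^ r)).eval x = 0 := by
  have hne : ((X : Polynomial ℝ) ^ 2 - 1) ≠ 0 := fun h => by
    simpa using congrArg (Polynomial.eval (0 : ℝ)) h
  have hw : ((X : Polynomial ℝ) ^ 2 - 1) ^ r ≠ 0 := pow_ne_zero _ hne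
  have hdvd : (X - C x) ^ r ∣ ((X : Polynomial ℝ) ^ 2 - 1) ^ r := by
    apply pow_dvd_pow_of_dvd
    rcases hx with rfl | rfl
    · have h2 : (X : Polynomial ℝ) ^ 2 - 1 = (X - C 1) * (X + C 1) := by
        simp only [map_one]; ring
      rw [h2]; exact dvd_mul_right _ _
    · have h2 : (X : Polynomial ℝ) ^ 2 - 1 = (X - C (-1)) * (X - C 1) := by
        simp only [map_neg, map_one]; ring
      rw [h2]; exact dvd_mul_right _ _
  exact isRoot_iterate_derivative_of_lt_rootMultiplicity
    (lt_of_lt_of_le hm ((le_rootMultiplicity_iff hw).mpr hdvd))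

lemma leg_orth (r : ℕ) (m : ℕ) (hm : m ≤ r) (t : Polynomial ℝ) (ht : t.degree < (m : ℕ)) :
    ∫ x in (-1 : ℝ)..1,
      t.eval x * ((fun p => Polynomial.derivative p)^[m] ((X ^ 2 - 1 : Polynomial ℝ) ^ r)).eval x
      = 0 := by
  induction m generalizing t with
  | zero =>
    have ht0 : t = 0 := by
      ext n
      exact (Polynomial.degree_lt_iff_coeff_zero t 0).mp ht n (Nat.zero_le n)
    simp [ht0]
  | succ m ih =>
    set D := (fun p => Polynomial.derivative p)^[m] ((X ^ 2 - 1 : Polynomial ℝ) ^ r) with hD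
    have iter : (fun p => Polynomial.derivative p)^[m + 1] ((X ^ 2 - 1 : Polynomial ℝ) ^ r)
        = Polynomial.derivative D := Function.iterate_succ_apply' _ _ _
    have ht' : (Polynomial.derivative t).degree < (m : ℕ) := by
      rw [Polynomial.degree_lt_iff_coeff_zero]
      intro k hk
      rw [Polynomial.coeff_derivative]
      have : t.coeff (k + 1) = 0 := by
        apply Polynomial.coeff_eq_zero_of_degree_lt
        refine lt_of_lt_of_le ht ?_
        exact_mod_cast Nat.cast_le.mpr (by exact_mod_cast Nat.succ_le_succ hk)
      simp [this]
    have hbd : m < r := lt_of_lt_of_le (Nat.lt_succ_self m) hm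
    have key : ∀ x : ℝ, t.eval x * (Polynomial.derivative D).eval x
        = (Polynomial.derivative (t * D)).eval x - (Polynomial.derivative t).eval x * D.eval x := by
      intro x
      rw [Polynomial.derivative_mul]
      simp only [Polynomial.eval_add, Polynomial.eval_mul]
      ring
    rw [iter]
    have hsplit : ∫ x in (-1 : ℝ)..1, t.eval x * (Polynomial.derivative D).eval x
        = (∫ x in (-1 : ℝ)..1, (Polynomial.derivative (t * D)).eval x)
          - ∫ x in (-1 : ℝ)..1, (Polynomial.derivative t).eval x * D.eval x := by
      rw [← intervalIntegral.integral_sub (g := fun x => (Polynomial.derivative t).eval x * D.eval x)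
        ((Polynomial.derivative (t * D)).continuous.intervalIntegrable _ _)
        (((Polynomial.derivative t).continuous.mul D.continuous).intervalIntegrable _ _)]
      exact intervalIntegral.integral_congr fun x _ => key x
    rw [hsplit, integral_poly_derivative]
    have hb1 : D.eval 1 = 0 := iterDeriv_w_root r m hbd 1 (Or.inl rfl)
    have hb2 : D.eval (-1) = 0 := iterDeriv_w_root r m hbd (-1) (Or.inr rfl)
    rw [Polynomial.eval_mul, Polynomial.eval_mul, hb1, hb2]
    rw [ih (le_of_lt hbd) (Polynomial.derivative t) ht']
    ring

lemma w_monic (r : ℕ) : (((X : Polynomial ℝ) ^ 2 - 1) ^ r).Monic := by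
  apply Polynomial.Monic.pow
  have h : ((X : Polynomial ℝ) ^ 2 - 1) = X ^ 2 - C 1 := by simp
  rw [h]
  exact Polynomial.monic_X_pow_sub_C 1 two_ne_zero

lemma w_natDegree (r : ℕ) : (((X : Polynomial ℝ) ^ 2 - 1) ^ r).natDegree = 2 * r := by
  rw [Polynomial.natDegree_pow]
  have h : ((X : Polynomial ℝ) ^ 2 - 1) = X ^ 2 - C 1 := by simp
  rw [h, Polynomial.natDegree_X_pow_sub_C]
  ring

lemma Leg_coeff (r : ℕ) : (Leg r).coeff r = ((2 * r).descFactorial r : ℝ) := by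
  have h := Polynomial.coeff_iterate_derivative (((X : Polynomial ℝ) ^ 2 - 1) ^ r) r (k := r)
  have h2 : (((X : Polynomial ℝ) ^ 2 - 1) ^ r).coeff (r + r) = 1 := by
    have := (w_monic r).coeff_natDegree
    rwa [w_natDegree, (by ring : 2 * r = r + r)] at this
  rw [Leg]
  show (Polynomial.derivative^[r] (((X : Polynomial ℝ) ^ 2 - 1) ^ r)).coeff r = _
  rw [h, h2, (by ring : r + r = 2 * r)]
  simp

lemma Leg_ne_zero (r : ℕ) : Leg r ≠ 0 := by
  intro h
  have h1 := Leg_coeff r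
  rw [h] at h1
  simp only [Polynomial.coeff_zero] at h1
  have h2 : (2 * r).descFactorial r = 0 := by exact_mod_cast h1.symm
  exact absurd (Nat.descFactorial_eq_zero_iff_lt.mp h2) (by omega)

lemma Leg_natDegree (r : ℕ) : (Leg r).natDegree = r := by
  apply le_antisymm
  · have h := Polynomial.natDegree_iterate_derivative (((X : Polynomial ℝ) ^ 2 - 1) ^ r) r
    rw [w_natDegree] at h
    calc (Leg r).natDegree
        = (Polynomial.derivative^[r] (((X : Polynomial ℝ) ^ 2 - 1) ^ r)).natDegree := rfl
      _ ≤ 2 * r - r := h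
      _ = r := by omega
  · apply Polynomial.le_natDegree_of_ne_zero
    rw [Leg_coeff]
    have hpos : (2 * r).descFactorial r ≠ 0 := fun h =>
      absurd (Nat.descFactorial_eq_zero_iff_lt.mp h) (by omega)
    exact_mod_cast hpos

lemma gauss_lt (r : ℕ) (G : ℕ → ℝ) (hG : ∀ k, 1 ≤ k → k < r → G k < G (k + 1)) :
    ∀ j k, 1 ≤ j → j < k → k ≤ r → G j < G k := by
  intro j k hj hjk hkr
  induction k with
  | zero => omega
  | succ k ih =>
    rcases Nat.lt_or_ge j k with h | h
    · exact (ih h (by omega)).trans (hG k (by omega) (by omega))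
    · have hjk' : j = k := by omega
      subst hjk'
      exact hG j hj (by omega)

lemma gauss_injOn (r : ℕ) (G : ℕ → ℝ) (hG : ∀ k, 1 ≤ k → k < r → G k < G (k + 1)) :
    Set.InjOn G (Finset.Icc 1 r) := by
  intro a ha b hb hab
  simp only [Finset.coe_Icc, Set.mem_Icc] at ha hb
  by_contra hne
  rcases Nat.lt_or_ge a b with h | h
  · exact absurd hab (ne_of_lt (gauss_lt r G hG a b ha.1 h hb.2))
  · have hba : b < a := by omega
    exact absurd hab.symm (ne_of_lt (gauss_lt r G hG b a hb.1 hba ha.2))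

noncomputable def omegaP (r : ℕ) (G : ℕ → ℝ) : Polynomial ℝ :=
  ∏ k ∈ Finset.Icc 1 r, (X - C (G k))

lemma omegaP_monic (r : ℕ) (G : ℕ → ℝ) : (omegaP r G).Monic :=
  Polynomial.monic_prod_of_monic _ _ fun k _ => Polynomial.monic_X_sub_C _

lemma omegaP_natDegree (r : ℕ) (G : ℕ → ℝ) : (omegaP r G).natDegree = r := by
  rw [omegaP, Polynomial.natDegree_prod _ _ (fun k _ => Polynomial.X_sub_C_ne_zero _)]
  simp [Nat.card_Icc]

lemma omegaP_eval_zero (r : ℕ) (G : ℕ → ℝ) (k : ℕ) (hk : k ∈ Finset.Icc 1 r) :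
    (omegaP r G).eval (G k) = 0 := by
  rw [omegaP, Polynomial.eval_prod]
  exact Finset.prod_eq_zero hk (by simp)

lemma Leg_eq_omegaP_mul (r : ℕ) (hr : 1 ≤ r) (G : ℕ → ℝ) (hG : IsGaussPoints r G) :
    ∃ e : ℝ, e ≠ 0 ∧ Leg r = omegaP r G * C e := by
  have hinj := gauss_injOn r G hG.1
  have hdvd : omegaP r G ∣ Leg r := by
    have hle : ((Finset.Icc 1 r).val.map G) ≤ (Leg r).roots := by
      rw [Multiset.le_iff_subset]
      · intro x hx
        obtain ⟨k, hk, rfl⟩ := Multiset.mem_map.mp hx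
        rw [Polynomial.mem_roots (Leg_ne_zero r)]
        have hk' : k ∈ Finset.Icc 1 r := hk
        simp only [Finset.mem_Icc] at hk'
        exact (hG.2 k hk'.1 hk'.2).2
      · exact Multiset.Nodup.map_on
          (fun a ha b hb h => hinj (by exact_mod_cast ha) (by exact_mod_cast hb) h)
          (Finset.Icc 1 r).nodup
    have hp := (Multiset.prod_X_sub_C_dvd_iff_le_roots (Leg_ne_zero r) _).mpr hle
    rw [Multiset.map_map] at hp
    rw [omegaP, Finset.prod_eq_multiset_prod]
    exact hp
  obtain ⟨v, hv⟩ := hdvd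
  have hv0 : v ≠ 0 := fun h => Leg_ne_zero r (by rw [hv, h, mul_zero])
  have hdeg : v.natDegree = 0 := by
    have h := Polynomial.natDegree_mul ((omegaP_monic r G).ne_zero) hv0
    rw [← hv, Leg_natDegree, omegaP_natDegree] at h
    omega
  refine ⟨v.coeff 0, ?_, ?_⟩
  · intro h
    exact hv0 (by rw [Polynomial.eq_C_of_natDegree_eq_zero hdeg, h, map_zero])
  · rw [hv, ← Polynomial.eq_C_of_natDegree_eq_zero hdeg]

lemma deg_lt_of_natDegree_le (P : Polynomial ℝ) (r : ℕ) (hr : 1 ≤ r)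
    (h : P.natDegree ≤ r - 1) : P.degree < (r : ℕ) := by
  refine lt_of_le_of_lt Polynomial.degree_le_natDegree ?_
  exact_mod_cast (by omega : P.natDegree < r)

lemma exact_low (r : ℕ) (hr : 1 ≤ r) (G A : ℕ → ℝ) (hG : IsGaussPoints r G)
    (hA : IsGaussWeights r G A) (u : Polynomial ℝ) (hu : u.degree < (r : ℕ)) :
    ∫ x in (-1 : ℝ)..1, u.eval x = ∑ k ∈ Finset.Icc 1 r, A k * u.eval (G k) := by
  classical
  choose ℓ hdeg hval hint using hA
  set L : ℕ → Polynomial ℝ := fun k =>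
    if h : 1 ≤ k ∧ k ≤ r then ℓ k h.1 h.2 else 0 with hL
  have hLdeg : ∀ k ∈ Finset.Icc 1 r, (L k).natDegree ≤ r - 1 := by
    intro k hk
    simp only [Finset.mem_Icc] at hk
    rw [hL]; simp only [dif_pos hk]; exact hdeg k hk.1 hk.2
  have hLval : ∀ k ∈ Finset.Icc 1 r, ∀ j, 1 ≤ j → j ≤ r →
      (L k).eval (G j) = if j = k then 1 else 0 := by
    intro k hk j hj1 hj2
    simp only [Finset.mem_Icc] at hk
    rw [hL]; simp only [dif_pos hk]; exact hval k hk.1 hk.2 j hj1 hj2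
  have hLint : ∀ k ∈ Finset.Icc 1 r, A k = ∫ x in (-1 : ℝ)..1, (L k).eval x := by
    intro k hk
    simp only [Finset.mem_Icc] at hk
    rw [hL]; simp only [dif_pos hk]; exact hint k hk.1 hk.2
  set d : Polynomial ℝ := u - ∑ k ∈ Finset.Icc 1 r, C (u.eval (G k)) * L k with hd
  have hd0 : d = 0 := by
    apply Polynomial.eq_zero_of_degree_lt_of_eval_index_eq_zero (Finset.Icc 1 r)
      (gauss_injOn r G hG.1)
    · rw [Nat.card_Icc, (by omega : r + 1 - 1 = r)]
      refine lt_of_le_of_lt (Polynomial.degree_sub_le _ _) (max_lt hu ?_)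
      refine lt_of_le_of_lt (Polynomial.degree_sum_le _ _) ?_
      rw [Finset.sup_lt_iff (by exact_mod_cast WithBot.bot_lt_coe r)]
      intro k hk
      refine lt_of_le_of_lt (Polynomial.degree_mul_le _ _) ?_
      refine lt_of_le_of_lt (add_le_add Polynomial.degree_C_le le_rfl) ?_
      rw [zero_add]
      exact deg_lt_of_natDegree_le _ r hr (hLdeg k hk)
    · intro j hj
      have hj' := Finset.mem_Icc.mp hj
      rw [hd]
      simp only [Polynomial.eval_sub, Polynomial.eval_finset_sum, Polynomial.eval_mul,
        Polynomial.eval_C]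
      rw [Finset.sum_congr rfl (fun k hk => by rw [hLval k hk j hj'.1 hj'.2])]
      simp only [mul_ite, mul_one, mul_zero, Finset.sum_ite_eq, hj, if_true, sub_self]
  have hu_eq : u = ∑ k ∈ Finset.Icc 1 r, C (u.eval (G k)) * L k := sub_eq_zero.mp hd0
  have step : ∀ k ∈ Finset.Icc 1 r, A k * u.eval (G k)
      = ∫ x in (-1 : ℝ)..1, (C (u.eval (G k)) * L k).eval x := by
    intro k hk
    simp only [Polynomial.eval_mul, Polynomial.eval_C]
    rw [intervalIntegral.integral_const_mul, ← hLint k hk]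
    ring
  symm
  calc ∑ k ∈ Finset.Icc 1 r, A k * u.eval (G k)
      = ∑ k ∈ Finset.Icc 1 r, ∫ x in (-1 : ℝ)..1, (C (u.eval (G k)) * L k).eval x :=
        Finset.sum_congr rfl step
    _ = ∫ x in (-1 : ℝ)..1, ∑ k ∈ Finset.Icc 1 r, (C (u.eval (G k)) * L k).eval x :=
        (intervalIntegral.integral_finset_sum fun k _ =>
          ((C (u.eval (G k)) * L k).continuous.intervalIntegrable _ _)).symm
    _ = ∫ x in (-1 : ℝ)..1, u.eval x := by
        refine intervalIntegral.integral_congr fun x _ => ?_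
        rw [← Polynomial.eval_finset_sum, ← hu_eq]

lemma omegaP_orth (r : ℕ) (hr : 1 ≤ r) (G : ℕ → ℝ) (hG : IsGaussPoints r G)
    (t : Polynomial ℝ) (ht : t.degree < (r : ℕ)) :
    ∫ x in (-1 : ℝ)..1, (t * omegaP r G).eval x = 0 := by
  obtain ⟨e, he, hLeg⟩ := Leg_eq_omegaP_mul r hr G hG
  have hω : omegaP r G = C e⁻¹ * Leg r := by
    rw [hLeg, mul_comm (omegaP r G), ← mul_assoc, ← map_mul, inv_mul_cancel₀ he, map_one, one_mul]
  have horth := leg_orth r r le_rfl t ht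
  have key : ∀ x : ℝ, (t * omegaP r G).eval x = e⁻¹ * (t.eval x *
      ((fun p => Polynomial.derivative p)^[r] ((X ^ 2 - 1 : Polynomial ℝ) ^ r)).eval x) := by
    intro x
    rw [hω]
    show eval x (t * (C e⁻¹ * Leg r)) = e⁻¹ * (eval x t * eval x (Leg r))
    simp only [Polynomial.eval_mul, Polynomial.eval_C]
    ring
  rw [intervalIntegral.integral_congr fun x _ => key x, intervalIntegral.integral_const_mul,
    horth, mul_zero]

lemma exact_main (r : ℕ) (hr : 1 ≤ r) (G A : ℕ → ℝ) (hG : IsGaussPoints r G)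
    (hA : IsGaussWeights r G A) (s : Polynomial ℝ) (hs : s.degree < (2 * r : ℕ)) :
    ∫ x in (-1 : ℝ)..1, s.eval x = ∑ k ∈ Finset.Icc 1 r, A k * s.eval (G k) := by
  rcases eq_or_ne s 0 with rfl | hs0
  · simp
  set ω := omegaP r G with hωdef
  have hmonic := omegaP_monic r G
  have hudeg : (s %ₘ ω).degree < (r : ℕ) := by
    have h := Polynomial.degree_modByMonic_lt s hmonic
    rwa [Polynomial.degree_eq_natDegree hmonic.ne_zero, omegaP_natDegree] at h
  have htdeg : (s /ₘ ω).degree < (r : ℕ) := by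
    apply deg_lt_of_natDegree_le _ _ hr
    rw [Polynomial.natDegree_divByMonic s hmonic, omegaP_natDegree]
    have h : s.natDegree < 2 * r := by
      rwa [← Polynomial.natDegree_lt_iff_degree_lt hs0] at hs
    omega
  have hsplit : s = s %ₘ ω + (s /ₘ ω) * ω := by
    conv_lhs => rw [← Polynomial.modByMonic_add_div s ω]
    ring
  calc ∫ x in (-1 : ℝ)..1, s.eval x
      = (∫ x in (-1 : ℝ)..1, (s %ₘ ω).eval x)
        + ∫ x in (-1 : ℝ)..1, ((s /ₘ ω) * ω).eval x := by
        rw [← intervalIntegral.integral_add ((s %ₘ ω).continuous.intervalIntegrable _ _)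
          (((s /ₘ ω) * ω).continuous.intervalIntegrable _ _)]
        refine intervalIntegral.integral_congr fun x _ => ?_
        conv_lhs => rw [hsplit]
        simp
    _ = ∑ k ∈ Finset.Icc 1 r, A k * (s %ₘ ω).eval (G k) := by
        rw [omegaP_orth r hr G hG _ htdeg, exact_low r hr G A hG hA _ hudeg, add_zero]
    _ = ∑ k ∈ Finset.Icc 1 r, A k * s.eval (G k) := by
        refine Finset.sum_congr rfl fun k hk => ?_
        congr 1
        conv_rhs => rw [hsplit]
        simp [hωdef, omegaP_eval_zero r G k hk]

lemma natDegree_q (r : ℕ) (p q : Polynomial ℝ) (hp : p.natDegree ≤ r)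
    (hq : Polynomial.derivative q = p) : q.natDegree ≤ r + 1 := by
  rw [Polynomial.natDegree_le_iff_degree_le, Polynomial.degree_le_iff_coeff_zero]
  intro m hm
  have hm' : r + 1 < m := by exact_mod_cast hm
  have h1 : p.coeff (m - 1) = 0 :=
    Polynomial.coeff_eq_zero_of_natDegree_lt (by omega)
  rw [← hq, Polynomial.coeff_derivative] at h1
  have hm1 : m - 1 + 1 = m := by omega
  rw [hm1] at h1
  have hne : ((m - 1 : ℕ) : ℝ) + 1 ≠ 0 := by positivity
  rcases mul_eq_zero.mp h1 with h | h
  · exact h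
  · exact absurd h hne

/-- Let `p` be a real polynomial with `deg p ≤ r`, `c ∈ ℝ`,
`q(y) = c + ∫_0^y p(t) dt` (i.e. `q' = p` and `q(0) = c`), and `F = p' ⬝ q`.
Then `deg F ≤ 2r`, the coefficient of `X^{2r}` in `F` is `(r/(r+1))·a²` where `a`
is the coefficient of `X^r` in `p`, and `∫_{−1}^{1} F ≥ Σ_{k=1}^{r} A_k F(G_k)`. -/
theorem gauss_quadrature_derivative_antiderivative (r : ℕ) (hr : 1 ≤ r) (G A : ℕ → ℝ)
    (hG : IsGaussPoints r G) (hA : IsGaussWeights r G A)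
    (p q F : Polynomial ℝ) (c : ℝ) (hp : p.natDegree ≤ r)
    (hq : Polynomial.derivative q = p) (hq0 : q.eval 0 = c)
    (hF : F = Polynomial.derivative p * q) :
    F.natDegree ≤ 2 * r ∧
    F.coeff (2 * r) = (r : ℝ) / ((r : ℝ) + 1) * (p.coeff r) ^ 2 ∧
    ∑ k ∈ Finset.Icc 1 r, A k * F.eval (G k) ≤ ∫ x in (-1 : ℝ)..1, F.eval x := by
  have hdp : (Polynomial.derivative p).natDegree ≤ r - 1 :=
    (Polynomial.natDegree_derivative_le p).trans (by omega)
  have hdq : q.natDegree ≤ r + 1 := natDegree_q r p q hp hq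
  have hFdeg : F.natDegree ≤ 2 * r := by
    rw [hF]
    refine (Polynomial.natDegree_mul_le).trans ?_
    omega
  -- coefficient computation
  have hcoeffq : q.coeff (r + 1) * ((r : ℝ) + 1) = p.coeff r := by
    have h := Polynomial.coeff_derivative q r
    rw [hq] at h
    exact h.symm
  have hcoeffdp : (Polynomial.derivative p).coeff (r - 1) = p.coeff r * (r : ℝ) := by
    have h := Polynomial.coeff_derivative p (r - 1)
    have h1 : r - 1 + 1 = r := by omega
    rw [h1] at h
    have h2 : ((r - 1 : ℕ) : ℝ) + 1 = (r : ℝ) := by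
      rw [Nat.cast_sub hr]; simp
    rw [h, h2]
  have hcoeff : F.coeff (2 * r) = (r : ℝ) / ((r : ℝ) + 1) * (p.coeff r) ^ 2 := by
    rw [hF, Polynomial.coeff_mul]
    rw [Finset.sum_eq_single (r - 1, r + 1)]
    · rw [hcoeffdp]
      have hq1 : q.coeff (r + 1) = p.coeff r / ((r : ℝ) + 1) := by
        have hne : ((r : ℝ) + 1) ≠ 0 := by positivity
        rw [eq_div_iff hne]
        exact hcoeffq
      rw [hq1]
      have hne : ((r : ℝ) + 1) ≠ 0 := by positivity
      field_simp
    · intro b hb hbne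
      have hb' := Finset.HasAntidiagonal.mem_antidiagonal.mp hb
      rcases Nat.lt_or_ge (r - 1) b.1 with h | h
      · have : (Polynomial.derivative p).coeff b.1 = 0 :=
          Polynomial.coeff_eq_zero_of_natDegree_lt (by omega)
        rw [this, zero_mul]
      · have hb1 : b.1 < r - 1 := by
          rcases Nat.lt_or_ge b.1 (r - 1) with h' | h'
          · exact h'
          · exfalso; apply hbne
            have : b.1 = r - 1 := by omega
            have : b.2 = r + 1 := by omega
            exact Prod.ext (by omega) this
        have : q.coeff b.2 = 0 :=
          Polynomial.coeff_eq_zero_of_natDegree_lt (by omega)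
        rw [this, mul_zero]
    · intro hnot
      exfalso
      exact hnot (Finset.HasAntidiagonal.mem_antidiagonal.mpr (by omega))
  refine ⟨hFdeg, hcoeff, ?_⟩
  -- the inequality
  set ω := omegaP r G with hωdef
  set Lc := F.coeff (2 * r) with hLc
  have hLnonneg : 0 ≤ Lc := by
    rw [hcoeff]
    positivity
  set s : Polynomial ℝ := F - C Lc * ω ^ 2 with hs
  have hω2monic : (ω ^ 2).Monic := (omegaP_monic r G).pow 2
  have hω2deg : (ω ^ 2).natDegree = 2 * r := by
    rw [Polynomial.natDegree_pow, omegaP_natDegree]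
  have hsdeg : s.degree < ((2 * r : ℕ) : WithBot ℕ) := by
    rw [Polynomial.degree_lt_iff_coeff_zero]
    intro m hm
    have hm' : 2 * r ≤ m := by exact_mod_cast hm
    rw [hs, Polynomial.coeff_sub, Polynomial.coeff_C_mul]
    rcases Nat.eq_or_lt_of_le hm' with h | h
    · rw [← h, ← hω2deg, hω2monic.coeff_natDegree, hω2deg, ← hLc]
      ring
    · rw [Polynomial.coeff_eq_zero_of_natDegree_lt (lt_of_le_of_lt hFdeg h),
        Polynomial.coeff_eq_zero_of_natDegree_lt (by rw [hω2deg]; exact h)]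
      ring
  have hFsplit : F = s + C Lc * ω ^ 2 := by rw [hs]; ring
  have hInt1 : ∫ x in (-1 : ℝ)..1, F.eval x
      = (∫ x in (-1 : ℝ)..1, s.eval x) + ∫ x in (-1 : ℝ)..1, (C Lc * ω ^ 2).eval x := by
    rw [← intervalIntegral.integral_add (s.continuous.intervalIntegrable _ _)
      ((C Lc * ω ^ 2).continuous.intervalIntegrable _ _)]
    refine intervalIntegral.integral_congr fun x _ => ?_
    conv_lhs => rw [hFsplit]
    simp
  have hInt2 : ∫ x in (-1 : ℝ)..1, s.eval x = ∑ k ∈ Finset.Icc 1 r, A k * s.eval (G k) :=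
    exact_main r hr G A hG hA s hsdeg
  have hevals : ∀ k ∈ Finset.Icc 1 r, s.eval (G k) = F.eval (G k) := by
    intro k hk
    rw [hs]
    simp [hωdef, omegaP_eval_zero r G k hk]
  have hInt3 : 0 ≤ ∫ x in (-1 : ℝ)..1, (C Lc * ω ^ 2).eval x := by
    apply intervalIntegral.integral_nonneg (by norm_num : (-1 : ℝ) ≤ 1)
    intro x _
    simp only [Polynomial.eval_mul, Polynomial.eval_C, Polynomial.eval_pow]
    positivity
  calc ∑ k ∈ Finset.Icc 1 r, A k * F.eval (G k)
      = ∑ k ∈ Finset.Icc 1 r, A k * s.eval (G k) :=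
        (Finset.sum_congr rfl fun k hk => by rw [hevals k hk]).symm
    _ = ∫ x in (-1 : ℝ)..1, s.eval x := hInt2.symm
    _ ≤ ∫ x in (-1 : ℝ)..1, F.eval x := by rw [hInt1]; linarith
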